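/- L¹-bound on excess cost-sensitive risk: for any π ∈ (0,1), c ∈ (0,1), and r : ℝ^d → [0,∞), R_{π,c}(sign(πr − c)) − R*_{π,c} ≤ π E_X[ |r*(X) − r(X)| ], where r* = p_+/p. -/

import Mathlib

open MeasureTheory Real

/-- The sign function mapping to `{±1}`. -/
noncomputable def sgn (x : ℝ) : ℝ := if 0 < x then 1 else -1

/-- Cost-sensitive classification risk with class-prior `pr` and false-positive cost `c`,
for class-conditional distributions `Pp` (positive) and `Pm` (negative). -/
noncomputable def costRisk {d : ℕ} (Pp Pm : Measure (Fin d → ℝ)) (pr c : ℝ)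
    (g : (Fin d → ℝ) → ℝ) : ℝ :=
  (1 - c) * pr * (Pp {x | sgn (g x) ≠ 1}).toReal
    + c * (1 - pr) * (Pm {x | sgn (g x) ≠ -1}).toReal

/-- Bayes-optimal cost-sensitive risk: infimum over all measurable decision functions. -/
noncomputable def bayesRisk {d : ℕ} (Pp Pm : Measure (Fin d → ℝ)) (pr c : ℝ) : ℝ :=
  ⨅ g : {g : (Fin d → ℝ) → ℝ // Measurable g}, costRisk Pp Pm pr c g.1

/-- Bregman divergence `B_f(r* ∥ r)` weighted by the distribution `P`. -/
noncomputable def bregman {d : ℕ} (P : Measure (Fin d → ℝ)) (f : ℝ → ℝ)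
    (rstar r : (Fin d → ℝ) → ℝ) : ℝ :=
  ∫ x, (f (rstar x) - f (r x) - deriv f (r x) * (rstar x - r x)) ∂P

/-- L¹-bound on the excess cost-sensitive risk. -/
theorem excess_risk_l1_bound {d : ℕ} (Pp Pm P : Measure (Fin d → ℝ))
    [IsProbabilityMeasure Pp] [IsProbabilityMeasure Pm] [IsProbabilityMeasure P]
    (pr c : ℝ) (hpr : pr ∈ Set.Ioo (0:ℝ) 1) (hc : c ∈ Set.Ioo (0:ℝ) 1)
    (rstar r : (Fin d → ℝ) → ℝ) (hrstar : Measurable rstar) (hr : Measurable r)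
    (hrstar0 : ∀ x, 0 ≤ rstar x) (hr0 : ∀ x, 0 ≤ r x)
    (hmix : P = ENNReal.ofReal pr • Pp + ENNReal.ofReal (1 - pr) • Pm)
    (hratio : ∀ S : Set (Fin d → ℝ), MeasurableSet S →
      (Pp S).toReal = ∫ x in S, rstar x ∂P)
    (hint : Integrable (fun x => |rstar x - r x|) P) :
    costRisk Pp Pm pr c (fun x => pr * r x - c) - bayesRisk Pp Pm pr c
      ≤ pr * ∫ x, |rstar x - r x| ∂P := by
  obtain ⟨hp0, hp1⟩ := hpr
  obtain ⟨hc0, hc1⟩ := hc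
  -- rstar is integrable
  have hPpU : (1:ℝ) = ∫ x, rstar x ∂P := by
    have h := hratio Set.univ MeasurableSet.univ
    simpa [measure_univ] using h
  have hint_rs : Integrable rstar P := by
    by_contra h
    rw [integral_undef h] at hPpU
    norm_num at hPpU
  have hint_abs : Integrable (fun x => pr * |rstar x - r x|) P := hint.const_mul pr
  have hint_one : Integrable (fun x => 1 - pr * rstar x) P :=
    (integrable_const 1).sub (hint_rs.const_mul pr)
  have hint_φ : Integrable (fun x => pr * rstar x - c) P :=
    (hint_rs.const_mul pr).sub (integrable_const c)
  -- identification of the decision sets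
  have hset1 : ∀ g : (Fin d → ℝ) → ℝ,
      {x | sgn (g x) ≠ 1} = {x | g x ≤ 0} := by
    intro g; ext x
    simp only [Set.mem_setOf_eq, sgn, ne_eq]
    split_ifs with h
    · norm_num; linarith
    · norm_num; linarith
  have hset2 : ∀ g : (Fin d → ℝ) → ℝ,
      {x | sgn (g x) ≠ -1} = {x | g x ≤ 0}ᶜ := by
    intro g; ext x
    simp only [Set.mem_setOf_eq, sgn, ne_eq, Set.mem_compl_iff]
    split_ifs with h
    · norm_num; linarith
    · norm_num; linarith
  -- one-minus integral formula
  have hone : ∀ S : Set (Fin d → ℝ), MeasurableSet S →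
      ∫ x in S, (1 - pr * rstar x) ∂P = (P S).toReal - pr * ∫ x in S, rstar x ∂P := by
    intro S hS
    rw [integral_sub (integrable_const 1).integrableOn (hint_rs.const_mul pr).integrableOn,
      integral_const_mul]
    simp [Measure.restrict_apply_univ, Measure.real_def]
  -- Pm formula
  have hPm : ∀ S : Set (Fin d → ℝ), MeasurableSet S →
      (1 - pr) * (Pm S).toReal = ∫ x in S, (1 - pr * rstar x) ∂P := by
    intro S hS
    have hfin1 : ENNReal.ofReal pr * Pp S ≠ ⊤ :=
      ENNReal.mul_ne_top ENNReal.ofReal_ne_top (measure_ne_top _ _)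
    have hfin2 : ENNReal.ofReal (1 - pr) * Pm S ≠ ⊤ :=
      ENNReal.mul_ne_top ENNReal.ofReal_ne_top (measure_ne_top _ _)
    have hPS : (P S).toReal = pr * (Pp S).toReal + (1 - pr) * (Pm S).toReal := by
      rw [hmix]
      simp only [Measure.add_apply, Measure.smul_apply, smul_eq_mul]
      rw [ENNReal.toReal_add hfin1 hfin2, ENNReal.toReal_mul, ENNReal.toReal_mul,
        ENNReal.toReal_ofReal hp0.le, ENNReal.toReal_ofReal (by linarith)]
    rw [hone S hS, ← hratio S hS]
    linarith
  -- risk decomposition for a decision rule with acceptance region `Sᶜ`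
  have hcost : ∀ S : Set (Fin d → ℝ), MeasurableSet S →
      (1 - c) * pr * (Pp S).toReal + c * (1 - pr) * (Pm Sᶜ).toReal
        = (∫ x in S, (pr * rstar x - c) ∂P) + c * ∫ x, (1 - pr * rstar x) ∂P := by
    intro S hSm
    have e1 : (Pp S).toReal = ∫ x in S, rstar x ∂P := hratio _ hSm
    have e2 : (1 - pr) * (Pm Sᶜ).toReal = ∫ x in Sᶜ, (1 - pr * rstar x) ∂P :=
      hPm _ hSm.compl
    have e3 : (∫ x in S, (1 - pr * rstar x) ∂P) + ∫ x in Sᶜ, (1 - pr * rstar x) ∂P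
        = ∫ x, (1 - pr * rstar x) ∂P := integral_add_compl hSm hint_one
    have e4 : ∫ x in S, (pr * rstar x - c) ∂P
        = pr * (∫ x in S, rstar x ∂P) - c * (P S).toReal := by
      rw [integral_sub (hint_rs.const_mul pr).integrableOn (integrable_const c).integrableOn,
        integral_const_mul, setIntegral_const, smul_eq_mul, Measure.real_def]
      ring
    have e5 := hone S hSm
    rw [e1, mul_assoc c (1 - pr), e2]
    linear_combination -e4 - c * e5 + c * e3
  set A : Set (Fin d → ℝ) := {x | pr * r x - c ≤ 0} with hAdef
  set B : Set (Fin d → ℝ) := {x | pr * rstar x - c ≤ 0} with hBdef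
  have hAm : MeasurableSet A :=
    measurableSet_le ((hr.const_mul pr).sub measurable_const) measurable_const
  have hBm : MeasurableSet B :=
    measurableSet_le ((hrstar.const_mul pr).sub measurable_const) measurable_const
  -- the plug-in rule with rstar minimizes ∫_S φ over measurable S
  have hlow : ∀ S : Set (Fin d → ℝ), MeasurableSet S →
      (∫ x in B, (pr * rstar x - c) ∂P) ≤ ∫ x in S, (pr * rstar x - c) ∂P := by
    intro S hSm
    have u1 : (∫ x in S ∩ B, (pr * rstar x - c) ∂P) + ∫ x in S \ B, (pr * rstar x - c) ∂P
        = ∫ x in S, (pr * rstar x - c) ∂P := integral_inter_add_diff hBm hint_φ.integrableOn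
    have u2 : (∫ x in B ∩ S, (pr * rstar x - c) ∂P) + ∫ x in B \ S, (pr * rstar x - c) ∂P
        = ∫ x in B, (pr * rstar x - c) ∂P := integral_inter_add_diff hSm hint_φ.integrableOn
    have hBS : B ∩ S = S ∩ B := Set.inter_comm _ _
    rw [hBS] at u2
    have u3 : 0 ≤ ∫ x in S \ B, (pr * rstar x - c) ∂P := by
      refine setIntegral_nonneg (hSm.diff hBm) fun x hx => ?_
      have : ¬ (pr * rstar x - c ≤ 0) := hx.2
      linarith [not_le.mp this]
    have u4 : (∫ x in B \ S, (pr * rstar x - c) ∂P) ≤ 0 := by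
      refine setIntegral_nonpos (hBm.diff hSm) fun x hx => ?_
      exact hx.1
    linarith
  -- lower bound on the Bayes risk
  have hbayes : (∫ x in B, (pr * rstar x - c) ∂P) + c * (∫ x, (1 - pr * rstar x) ∂P)
      ≤ bayesRisk Pp Pm pr c := by
    haveI : Nonempty {g : (Fin d → ℝ) → ℝ // Measurable g} := ⟨⟨fun _ => 0, measurable_const⟩⟩
    refine le_ciInf fun g => ?_
    have hSm : MeasurableSet {x | g.1 x ≤ 0} := measurableSet_le g.2 measurable_const
    have : costRisk Pp Pm pr c g.1
        = (∫ x in {x | g.1 x ≤ 0}, (pr * rstar x - c) ∂P)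
          + c * ∫ x, (1 - pr * rstar x) ∂P := by
      simp only [costRisk, hset1 g.1, hset2 g.1]
      exact hcost _ hSm
    rw [this]
    have := hlow _ hSm
    linarith
  -- value of the plug-in rule with r
  have hcr : costRisk Pp Pm pr c (fun x => pr * r x - c) = (∫ x in A, (pr * rstar x - c) ∂P)
      + c * ∫ x, (1 - pr * rstar x) ∂P := by
    simp only [costRisk, hset1 (fun x => pr * r x - c), hset2 (fun x => pr * r x - c)]
    exact hcost _ hAm
  -- bound the difference of the two set integrals
  have d1 : (∫ x in A ∩ B, (pr * rstar x - c) ∂P) + ∫ x in A \ B, (pr * rstar x - c) ∂P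
      = ∫ x in A, (pr * rstar x - c) ∂P := integral_inter_add_diff hBm hint_φ.integrableOn
  have d2 : (∫ x in B ∩ A, (pr * rstar x - c) ∂P) + ∫ x in B \ A, (pr * rstar x - c) ∂P
      = ∫ x in B, (pr * rstar x - c) ∂P := integral_inter_add_diff hAm hint_φ.integrableOn
  have hBA : B ∩ A = A ∩ B := Set.inter_comm _ _
  rw [hBA] at d2
  have b1 : ∫ x in A \ B, (pr * rstar x - c) ∂P ≤ ∫ x in A \ B, pr * |rstar x - r x| ∂P := by
    refine setIntegral_mono_on hint_φ.integrableOn hint_abs.integrableOn (hAm.diff hBm) ?_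
    intro x hx
    have hx1 : pr * r x - c ≤ 0 := hx.1
    have hx2 : ¬ (pr * rstar x - c ≤ 0) := hx.2
    have key : pr * (rstar x - r x) ≤ pr * |rstar x - r x| :=
      mul_le_mul_of_nonneg_left (le_abs_self _) hp0.le
    rw [mul_sub] at key
    linarith [not_le.mp hx2]
  have b2 : -∫ x in B \ A, (pr * rstar x - c) ∂P ≤ ∫ x in B \ A, pr * |rstar x - r x| ∂P := by
    rw [← integral_neg]
    refine setIntegral_mono_on hint_φ.neg.integrableOn hint_abs.integrableOn (hBm.diff hAm) ?_
    intro x hx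
    have hx1 : pr * rstar x - c ≤ 0 := hx.1
    have hx2 : ¬ (pr * r x - c ≤ 0) := hx.2
    have key : pr * (r x - rstar x) ≤ pr * |rstar x - r x| := by
      refine mul_le_mul_of_nonneg_left ?_ hp0.le
      calc r x - rstar x ≤ |r x - rstar x| := le_abs_self _
        _ = |rstar x - r x| := abs_sub_comm _ _
    rw [mul_sub] at key
    simp only [Pi.neg_apply, neg_sub]
    linarith [not_le.mp hx2]
  have b3 : (∫ x in A \ B, pr * |rstar x - r x| ∂P) + ∫ x in B \ A, pr * |rstar x - r x| ∂P
      ≤ ∫ x, pr * |rstar x - r x| ∂P := by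
    rw [← setIntegral_union disjoint_sdiff_sdiff (hBm.diff hAm) hint_abs.integrableOn
      hint_abs.integrableOn]
    exact setIntegral_le_integral hint_abs
      (Filter.Eventually.of_forall fun x => mul_nonneg hp0.le (abs_nonneg _))
  have hfinal : ∫ x, pr * |rstar x - r x| ∂P = pr * ∫ x, |rstar x - r x| ∂P :=
    integral_const_mul pr _
  rw [hcr]
  linarith
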